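/- Let p ∈ (0,1) and d₁ > 0. For E > d₁ let V_E be a random variable with P(V_E = d₁/2) = p and P(V_E = (E − p·d₁/2)/(1 − p)) = 1 − p. Then (E − p·d₁/2)/(1 − p) > d₁, E(V_E) = E, P(V_E < d₁) = p and Var(V_E) > 0; moreover there exists E₀ > d₁ such that for all E ≥ E₀ one has E⁴(1 − p) + d₁³·p·E − E²·d₁² − d₁⁴·p/4 ≥ 0, which is equivalent to E(V_E)⁴ ≥ d₁²·E(V_E²). For such E, the lognormal random variable W with the same mean and variance as V_E, i.e. with parameters μ̃ = ½ ln(E(V_E)⁴/E(V_E²)) and σ̃ = √(ln(E(V_E²)/E(V_E)²)), satisfies P(W < d₁) = Φ((ln d₁ − μ̃)/σ̃) ≤ 1/2, while the actual default probability P(V_E < d₁) = p can be any value in (0,1); in particular for p > 1/2 the moment-matched lognormal model underestimates the actual default probability. -/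

import Mathlib

open MeasureTheory ProbabilityTheory

noncomputable def stdNormalCdf (x : ℝ) : ℝ :=
  ((ProbabilityTheory.gaussianReal 0 1) (Set.Iic x)).toReal

lemma gaussianReal_neg_map :
    (gaussianReal 0 1).map (fun x : ℝ => -1 * x) = gaussianReal 0 1 := by
  rw [gaussianReal_map_const_mul (μ := 0) (v := 1) (-1)]
  norm_num

lemma gaussianReal_singleton (z : ℝ) : gaussianReal 0 1 {z} = 0 :=
  gaussianReal_absolutelyContinuous 0 one_ne_zero (measure_singleton z)

lemma gaussianReal_Iio_eq_Iic (z : ℝ) :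
    gaussianReal 0 1 (Set.Iio z) = gaussianReal 0 1 (Set.Iic z) := by
  refine le_antisymm (measure_mono Set.Iio_subset_Iic_self) ?_
  calc gaussianReal 0 1 (Set.Iic z) = gaussianReal 0 1 (Set.Iio z ∪ {z}) := by
        rw [Set.Iio_union_right]
    _ ≤ gaussianReal 0 1 (Set.Iio z) + gaussianReal 0 1 {z} := measure_union_le _ _
    _ = gaussianReal 0 1 (Set.Iio z) := by rw [gaussianReal_singleton, add_zero]

lemma stdNormalCdf_zero : stdNormalCdf 0 = 1 / 2 := by
  have hmap : gaussianReal 0 1 (Set.Iic 0) = gaussianReal 0 1 (Set.Ici 0) := by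
    conv_rhs => rw [← gaussianReal_neg_map]
    rw [Measure.map_apply (by fun_prop) measurableSet_Ici]
    congr 1
    ext x
    simp
  have hsum : gaussianReal 0 1 (Set.Iic 0) + gaussianReal 0 1 (Set.Ici 0)
      = 1 + gaussianReal 0 1 {(0:ℝ)} := by
    rw [← measure_union_add_inter (Set.Iic 0) measurableSet_Ici]
    simp [Set.Iic_union_Ici, Set.Iic_inter_Ici]
  rw [gaussianReal_singleton, add_zero, ← hmap] at hsum
  have h2 : (2 : ℝ) * stdNormalCdf 0 = 1 := by
    have := congrArg ENNReal.toReal hsum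
    rw [ENNReal.toReal_add (measure_ne_top _ _) (measure_ne_top _ _)] at this
    simpa [stdNormalCdf, two_mul] using this
  linarith

lemma stdNormalCdf_mono {x y : ℝ} (h : x ≤ y) : stdNormalCdf x ≤ stdNormalCdf y :=
  ENNReal.toReal_mono (measure_ne_top _ _) (measure_mono (Set.Iic_subset_Iic.2 h))

lemma stdNormalCdf_le_half {x : ℝ} (h : x ≤ 0) : stdNormalCdf x ≤ 1 / 2 :=
  stdNormalCdf_zero ▸ stdNormalCdf_mono h

lemma gaussianReal_Iio (μ σ x : ℝ) (hσ : 0 < σ) :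
    gaussianReal μ ⟨σ ^ 2, sq_nonneg σ⟩ (Set.Iio x)
      = ENNReal.ofReal (stdNormalCdf ((x - μ) / σ)) := by
  have h1 : gaussianReal μ ⟨σ ^ 2, sq_nonneg σ⟩
      = ((gaussianReal 0 1).map (σ * ·)).map (· + μ) := by
    rw [gaussianReal_map_const_mul, gaussianReal_map_add_const]
    norm_num
    exact congrArg (gaussianReal μ) (NNReal.eq (by rfl))
  rw [h1, Measure.map_apply (by fun_prop) measurableSet_Iio,
    Measure.map_apply (by fun_prop) (by exact measurableSet_Iio.preimage (by fun_prop))]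
  have hset : ((σ * ·) ⁻¹' ((· + μ) ⁻¹' Set.Iio x)) = Set.Iio ((x - μ) / σ) := by
    ext y
    simp only [Set.mem_preimage, Set.mem_Iio]
    rw [lt_div_iff₀ hσ]
    constructor <;> intro h <;> nlinarith
  rw [hset, gaussianReal_Iio_eq_Iic, stdNormalCdf,
    ENNReal.ofReal_toReal (measure_ne_top _ _)]


section TwoPoint
variable {Ω : Type} [MeasurableSpace Ω] (P : Measure Ω) [IsProbabilityMeasure P]
variable {X : Ω → ℝ} {a b p : ℝ}

lemma twoPoint_ae (hX : Measurable X) (hp0 : 0 < p) (hp1 : p < 1) (hab : a ≠ b)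
    (hA : P {ω | X ω = a} = ENNReal.ofReal p)
    (hB : P {ω | X ω = b} = ENNReal.ofReal (1 - p)) :
    ∀ᵐ ω ∂P, X ω = a ∨ X ω = b := by
  have hAm : MeasurableSet {ω | X ω = a} := hX (measurableSet_singleton a)
  have hBm : MeasurableSet {ω | X ω = b} := hX (measurableSet_singleton b)
  have hdisj : Disjoint {ω | X ω = a} {ω | X ω = b} := by
    rw [Set.disjoint_left]
    intro ω h1 h2
    simp only [Set.mem_setOf_eq] at h1 h2
    exact hab (h1.symm.trans h2)
  have hunion : P ({ω | X ω = a} ∪ {ω | X ω = b}) = 1 := by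
    rw [measure_union hdisj hBm, hA, hB, ← ENNReal.ofReal_add hp0.le (by linarith)]
    norm_num
  have hcompl : P ({ω | X ω = a} ∪ {ω | X ω = b})ᶜ = 0 := by
    rw [measure_compl (hAm.union hBm) (measure_ne_top _ _), hunion, measure_univ,
      tsub_self]
  rw [ae_iff]
  convert hcompl using 2
  ext ω; simp


lemma twoPoint_integral (hX : Measurable X) (hp0 : 0 < p) (hp1 : p < 1) (hab : a ≠ b)
    (hA : P {ω | X ω = a} = ENNReal.ofReal p)
    (hB : P {ω | X ω = b} = ENNReal.ofReal (1 - p))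
    (g : ℝ → ℝ) :
    ∫ ω, g (X ω) ∂P = p * g a + (1 - p) * g b := by
  have hAm : MeasurableSet {ω | X ω = a} := hX (measurableSet_singleton a)
  have hBm : MeasurableSet {ω | X ω = b} := hX (measurableSet_singleton b)
  have hae := twoPoint_ae P hX hp0 hp1 hab hA hB
  have heq : (fun ω => g (X ω)) =ᵐ[P]
      fun ω => ({ω | X ω = a}).indicator (fun _ => g a) ω
        + ({ω | X ω = b}).indicator (fun _ => g b) ω := by
    filter_upwards [hae] with ω hω
    rcases hω with h | h
    · have hnb : ω ∉ {ω | X ω = b} := fun h' => hab (h.symm.trans h')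
      simp [Set.indicator_of_mem (show ω ∈ {ω | X ω = a} from h),
        Set.indicator_of_notMem hnb, h]
    · have hna : ω ∉ {ω | X ω = a} := fun h' => hab (h'.symm.trans h)
      simp [Set.indicator_of_mem (show ω ∈ {ω | X ω = b} from h),
        Set.indicator_of_notMem hna, h]
  rw [integral_congr_ae heq,
    integral_add ((integrable_const (g a)).indicator hAm)
      ((integrable_const (g b)).indicator hBm),
    integral_indicator_const _ hAm, integral_indicator_const _ hBm, measureReal_def, measureReal_def, hA, hB,
    ENNReal.toReal_ofReal hp0.le, ENNReal.toReal_ofReal (by linarith)]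
  simp [mul_comm]

lemma twoPoint_memLp (hX : Measurable X) (hp0 : 0 < p) (hp1 : p < 1) (hab : a ≠ b)
    (hA : P {ω | X ω = a} = ENNReal.ofReal p)
    (hB : P {ω | X ω = b} = ENNReal.ofReal (1 - p)) :
    MemLp X 2 P := by
  refine MemLp.of_bound (hX.aestronglyMeasurable) (max |a| |b|) ?_
  filter_upwards [twoPoint_ae P hX hp0 hp1 hab hA hB] with ω hω
  rcases hω with h | h
  · rw [Real.norm_eq_abs, h]; exact le_max_left _ _
  · rw [Real.norm_eq_abs, h]; exact le_max_right _ _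

lemma twoPoint_lt (hX : Measurable X) (hp0 : 0 < p) (hp1 : p < 1)
    {c : ℝ} (hac : a < c) (hcb : c ≤ b)
    (hA : P {ω | X ω = a} = ENNReal.ofReal p)
    (hB : P {ω | X ω = b} = ENNReal.ofReal (1 - p)) :
    P {ω | X ω < c} = ENNReal.ofReal p := by
  have hBm : MeasurableSet {ω | X ω = b} := hX (measurableSet_singleton b)
  refine le_antisymm ?_ ?_
  · have hsub : {ω | X ω < c} ⊆ {ω | X ω = b}ᶜ := by
      intro ω h hb'
      rw [Set.mem_setOf_eq] at h
      rw [Set.mem_setOf_eq] at hb'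
      rw [hb'] at h
      exact absurd h (not_lt.2 hcb)
    calc P {ω | X ω < c} ≤ P ({ω | X ω = b}ᶜ) := measure_mono hsub
      _ = 1 - ENNReal.ofReal (1 - p) := by
          rw [measure_compl hBm (measure_ne_top _ _), hB, measure_univ]
      _ = ENNReal.ofReal p := by
          rw [ENNReal.sub_eq_of_eq_add ENNReal.ofReal_ne_top]
          rw [← ENNReal.ofReal_add hp0.le (by linarith)]
          norm_num
  · rw [← hA]
    refine measure_mono fun ω h => ?_
    simp only [Set.mem_setOf_eq] at h ⊢
    rw [h]
    exact hac

end TwoPoint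


theorem two_point_firm_value_lognormal_underestimation
    (Ω : Type) [MeasurableSpace Ω] (P : Measure Ω) [IsProbabilityMeasure P]
    (p d₁ : ℝ) (hp : p ∈ Set.Ioo (0 : ℝ) 1) (hd₁ : 0 < d₁)
    (V : ℝ → Ω → ℝ) (hVmeas : ∀ E, Measurable (V E))
    (hV1 : ∀ E : ℝ, d₁ < E → P {ω | V E ω = d₁ / 2} = ENNReal.ofReal p)
    (hV2 : ∀ E : ℝ, d₁ < E →
      P {ω | V E ω = (E - p * d₁ / 2) / (1 - p)} = ENNReal.ofReal (1 - p)) :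
    (∀ E : ℝ, d₁ < E →
      d₁ < (E - p * d₁ / 2) / (1 - p) ∧
      (∫ ω, V E ω ∂P) = E ∧
      P {ω | V E ω < d₁} = ENNReal.ofReal p ∧
      0 < variance (V E) P) ∧
    (∃ E₀ : ℝ, d₁ < E₀ ∧ ∀ E : ℝ, E₀ ≤ E →
      0 ≤ E ^ 4 * (1 - p) + d₁ ^ 3 * p * E - E ^ 2 * d₁ ^ 2 - d₁ ^ 4 * p / 4) ∧
    (∀ E : ℝ, d₁ < E →
      (0 ≤ E ^ 4 * (1 - p) + d₁ ^ 3 * p * E - E ^ 2 * d₁ ^ 2 - d₁ ^ 4 * p / 4 ↔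
        d₁ ^ 2 * (∫ ω, (V E ω) ^ 2 ∂P) ≤ (∫ ω, V E ω ∂P) ^ 4)) ∧
    (∀ E : ℝ, d₁ < E →
      d₁ ^ 2 * (∫ ω, (V E ω) ^ 2 ∂P) ≤ (∫ ω, V E ω ∂P) ^ 4 →
      ∀ μt σt : ℝ,
        μt = (1 / 2) * Real.log ((∫ ω, V E ω ∂P) ^ 4 / (∫ ω, (V E ω) ^ 2 ∂P)) →
        σt = Real.sqrt (Real.log ((∫ ω, (V E ω) ^ 2 ∂P) / (∫ ω, V E ω ∂P) ^ 2)) →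
        ((ProbabilityTheory.gaussianReal μt ⟨σt ^ 2, sq_nonneg σt⟩).map Real.exp)
            (Set.Iio d₁) = ENNReal.ofReal (stdNormalCdf ((Real.log d₁ - μt) / σt)) ∧
        stdNormalCdf ((Real.log d₁ - μt) / σt) ≤ 1 / 2 ∧
        (1 / 2 < p → stdNormalCdf ((Real.log d₁ - μt) / σt) < p)) := by
  obtain ⟨hp0, hp1⟩ := hp
  have h1p : 0 < 1 - p := by linarith
  have key : ∀ E : ℝ, d₁ < E →
      d₁ < (E - p * d₁ / 2) / (1 - p) ∧
      (∫ ω, V E ω ∂P) = E ∧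
      (∫ ω, (V E ω) ^ 2 ∂P)
        = p * (d₁ / 2) ^ 2 + (1 - p) * ((E - p * d₁ / 2) / (1 - p)) ^ 2 ∧
      P {ω | V E ω < d₁} = ENNReal.ofReal p ∧
      variance (V E) P = (∫ ω, (V E ω) ^ 2 ∂P) - (∫ ω, V E ω ∂P) ^ 2 ∧
      0 < variance (V E) P := by
    intro E hE
    set b := (E - p * d₁ / 2) / (1 - p) with hbdef
    have hb : d₁ < b := by
      rw [hbdef, lt_div_iff₀ h1p]
      nlinarith
    have hab : d₁ / 2 ≠ b := ne_of_lt (by linarith)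
    have hA := hV1 E hE
    have hB := hV2 E hE
    have hmean : (∫ ω, V E ω ∂P) = p * (d₁ / 2) + (1 - p) * b := by
      simpa using twoPoint_integral P (hVmeas E) hp0 hp1 hab hA hB (fun x => x)
    have hsq : (∫ ω, (V E ω) ^ 2 ∂P) = p * (d₁ / 2) ^ 2 + (1 - p) * b ^ 2 := by
      simpa using twoPoint_integral P (hVmeas E) hp0 hp1 hab hA hB (fun x => x ^ 2)
    have hmean' : (∫ ω, V E ω ∂P) = E := by
      rw [hmean, hbdef]
      field_simp
      ring
    have hvar : variance (V E) P = (∫ ω, (V E ω) ^ 2 ∂P) - (∫ ω, V E ω ∂P) ^ 2 := by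
      have h := variance_eq_sub (twoPoint_memLp P (hVmeas E) hp0 hp1 hab hA hB)
      simpa [Pi.pow_apply] using h
    refine ⟨hb, hmean', hsq,
      twoPoint_lt P (hVmeas E) hp0 hp1 (by linarith) hb.le hA hB, hvar, ?_⟩
    rw [hvar, hsq, hmean']
    have hEval : E = p * (d₁ / 2) + (1 - p) * b := by rw [← hmean', hmean]
    nlinarith [mul_pos (mul_pos hp0 h1p) (pow_pos (show (0:ℝ) < b - d₁ / 2 by linarith) 2)]
  refine ⟨fun E hE => ⟨(key E hE).1, (key E hE).2.1, (key E hE).2.2.2.1,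
      (key E hE).2.2.2.2.2⟩, ?_, ?_, ?_⟩
  · refine ⟨d₁ + 2 * d₁ / (1 - p), lt_add_of_pos_right _ (by positivity), ?_⟩
    intro E hE
    have hEd : d₁ ≤ E := by
      have : 0 < 2 * d₁ / (1 - p) := by positivity
      linarith
    have h1 : 2 * d₁ ≤ E * (1 - p) := by
      have h2 : 2 * d₁ / (1 - p) ≤ E := by
        have : 0 < d₁ := hd₁
        linarith
      calc 2 * d₁ = (2 * d₁ / (1 - p)) * (1 - p) := by field_simp
        _ ≤ E * (1 - p) := by nlinarith
    have hE0 : 0 < E := lt_of_lt_of_le hd₁ hEd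
    have t1 : 2 * d₁ * E ^ 3 ≤ E ^ 4 * (1 - p) := by
      nlinarith [mul_le_mul_of_nonneg_left h1 (pow_pos hE0 3).le]
    have t2 : d₁ ^ 2 * E ^ 2 ≤ d₁ * E ^ 3 := by
      nlinarith [mul_le_mul_of_nonneg_left hEd (mul_nonneg hd₁.le (sq_nonneg E))]
    have t3 : d₁ ^ 3 * E ≤ d₁ * E ^ 3 := by
      have hsq : d₁ ^ 2 ≤ E ^ 2 := by nlinarith
      nlinarith [mul_le_mul_of_nonneg_left hsq (mul_nonneg hd₁.le hE0.le)]
    have t4 : d₁ ^ 4 * p / 4 ≤ d₁ ^ 3 * E := by nlinarith [pow_pos hd₁ 4, pow_pos hd₁ 3]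
    nlinarith [mul_nonneg (mul_nonneg (pow_pos hd₁ 3).le hp0.le) hE0.le]
  · intro E hE
    obtain ⟨hb, hmean, hsq, -, -, -⟩ := key E hE
    rw [hmean, hsq]
    have hid : E ^ 4 * (1 - p) + d₁ ^ 3 * p * E - E ^ 2 * d₁ ^ 2 - d₁ ^ 4 * p / 4
        = (1 - p) * (E ^ 4
          - d₁ ^ 2 * (p * (d₁ / 2) ^ 2 + (1 - p) * ((E - p * d₁ / 2) / (1 - p)) ^ 2)) := by
      field_simp
      ring
    rw [hid]
    constructor <;> intro h <;> nlinarith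
  · intro E hE h4 μt σt hμt hσt
    obtain ⟨hb, hmean, hsq, -, hvar, hvarpos⟩ := key E hE
    rw [hmean] at h4 hμt hσt hvar
    set M2 := ∫ ω, (V E ω) ^ 2 ∂P with hM2
    have hEpos : 0 < E := lt_trans hd₁ hE
    have hgt : E ^ 2 < M2 := by
      rw [hvar] at hvarpos
      linarith
    have hM2pos : 0 < M2 := lt_trans (pow_pos hEpos 2) hgt
    have hσpos : 0 < σt := by
      rw [hσt]
      apply Real.sqrt_pos.2
      apply Real.log_pos
      rw [lt_div_iff₀ (pow_pos hEpos 2)]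
      linarith
    have harg : (Real.log d₁ - μt) / σt ≤ 0 := by
      apply div_nonpos_of_nonpos_of_nonneg _ hσpos.le
      rw [sub_nonpos, hμt]
      have h5 : d₁ ^ 2 ≤ E ^ 4 / M2 := (le_div_iff₀ hM2pos).2 (by linarith)
      have h6 : Real.log (d₁ ^ 2) ≤ Real.log (E ^ 4 / M2) :=
        Real.log_le_log (by positivity) h5
      rw [Real.log_pow] at h6
      push_cast at h6
      linarith
    refine ⟨?_, stdNormalCdf_le_half harg,
      fun hp2 => lt_of_le_of_lt (stdNormalCdf_le_half harg) hp2⟩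
    rw [Measure.map_apply Real.measurable_exp measurableSet_Iio]
    have hpre : Real.exp ⁻¹' Set.Iio d₁ = Set.Iio (Real.log d₁) := by
      ext x
      simp [Real.lt_log_iff_exp_lt hd₁]
    rw [hpre, gaussianReal_Iio μt σt (Real.log d₁) hσpos]
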